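/- arXiv:2003.00527 — 2 statements merged into one kernel-verified Lean document; each statement's English description precedes it below -/
import Mathlib

section
/- Craig's formula: for x ≥ 0, Q(x) = (1/π) ∫_0^{π/2} exp(-x²/(2 sin²θ)) dθ, where Q is the standard Gaussian tail function. -/
open Real MeasureTheory intervalIntegral

private lemma radial_integral (c : ℝ) :
    ∫ r in Set.Ioi c, r * Real.exp (-r ^ 2 / 2) = Real.exp (-c ^ 2 / 2) := by
  have hfun : (fun r : ℝ => r * Real.exp (-r ^ 2 / 2))
      = fun r : ℝ => r * Real.exp (-(1/2) * r ^ 2) := by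
    funext r; ring_nf
  have hint : IntegrableOn (fun r : ℝ => r * Real.exp (-r ^ 2 / 2)) (Set.Ioi c) := by
    rw [hfun]
    exact (integrable_mul_exp_neg_mul_sq (by norm_num : (0:ℝ) < 1/2)).integrableOn
  have hderiv : ∀ r ∈ Set.Ici c, HasDerivAt (fun r : ℝ => -Real.exp (-r ^ 2 / 2))
      (r * Real.exp (-r ^ 2 / 2)) r := by
    intro r _
    have h1 : HasDerivAt (fun r : ℝ => -r ^ 2 / 2) (-r) r := by
      have := ((hasDerivAt_pow 2 r).neg).div_const 2
      simpa using this.congr_deriv (by ring)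
    have := (h1.exp).neg
    exact this.congr_deriv (by ring)
  have htend : Filter.Tendsto (fun r : ℝ => -Real.exp (-r ^ 2 / 2)) Filter.atTop (nhds 0) := by
    rw [show (0:ℝ) = -0 by ring]
    apply Filter.Tendsto.neg
    apply Real.tendsto_exp_atBot.comp
    have h2 : Filter.Tendsto (fun x : ℝ => x ^ 2 / 2) Filter.atTop Filter.atTop :=
      (Filter.tendsto_pow_atTop two_ne_zero).atTop_div_const (by norm_num)
    exact (Filter.tendsto_neg_atTop_atBot.comp h2).congr (fun x => by
      show -(x^2/2) = -x^2/2; ring)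
  have := integral_Ioi_of_hasDerivAt_of_tendsto' hderiv hint htend
  rw [this]; ring_nf

/-- The standard Gaussian tail function `Q(x) = (1/√(2π)) ∫_x^∞ exp(-t²/2) dt`. -/
noncomputable def gaussQ (x : ℝ) : ℝ :=
  (Real.sqrt (2 * Real.pi))⁻¹ * ∫ t in Set.Ioi x, Real.exp (-t ^ 2 / 2)

set_option maxHeartbeats 1600000 in
/-- Craig's formula: for `x ≥ 0`,
`Q(x) = (1/π) ∫_0^{π/2} exp(-x²/(2 sin²θ)) dθ`. -/
theorem stmt_5 (x : ℝ) (hx : 0 ≤ x) :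
    gaussQ x = (1 / Real.pi) *
      ∫ θ in (0 : ℝ)..(Real.pi / 2), Real.exp (-x ^ 2 / (2 * Real.sin θ ^ 2)) := by
  set f : ℝ × ℝ → ℝ :=
    (Set.Ici x ×ˢ Set.Ici (0:ℝ)).indicator (fun q => Real.exp (-(q.1 ^ 2 + q.2 ^ 2) / 2))
    with hf
  set h : ℝ × ℝ → ℝ := fun p =>
    if x ≤ p.1 * Real.cos p.2 ∧ 0 ≤ p.1 * Real.sin p.2 then p.1 * Real.exp (-p.1 ^ 2 / 2)
    else 0 with hh
  set μp : Measure (ℝ × ℝ) :=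
    (volume.restrict (Set.Ioi (0:ℝ))).prod (volume.restrict (Set.Ioo (-π) π)) with hμp
  -- the polar-coordinates integrand equals h
  have hpt : ∀ p : ℝ × ℝ, p.1 • f (polarCoord.symm p) = h p := by
    intro p
    rw [hf, hh]
    have hsq : -((p.1 * Real.cos p.2) ^ 2 + (p.1 * Real.sin p.2) ^ 2) / 2 = -p.1 ^ 2 / 2 := by
      have := Real.sin_sq_add_cos_sq p.2; nlinarith [this]
    simp only [polarCoord_symm_apply, Set.indicator_apply, Set.mem_prod, Set.mem_Ici,
      smul_eq_mul]
    by_cases hcond : x ≤ p.1 * Real.cos p.2 ∧ 0 ≤ p.1 * Real.sin p.2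
    · rw [if_pos hcond, if_pos hcond, hsq]
    · rw [if_neg hcond, if_neg hcond, mul_zero]
  -- measurability of h
  have hC : MeasurableSet {p : ℝ × ℝ | x ≤ p.1 * Real.cos p.2 ∧ 0 ≤ p.1 * Real.sin p.2} := by
    rw [Set.setOf_and]
    exact (measurableSet_le measurable_const
        (measurable_fst.mul (Real.measurable_cos.comp measurable_snd))).inter
      (measurableSet_le measurable_const
        (measurable_fst.mul (Real.measurable_sin.comp measurable_snd)))
  have hhind : h = Set.indicator {p : ℝ × ℝ | x ≤ p.1 * Real.cos p.2 ∧ 0 ≤ p.1 * Real.sin p.2}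
      (fun p => p.1 * Real.exp (-p.1 ^ 2 / 2)) := by
    funext p; rw [hh, Set.indicator_apply]; rfl
  have hmeas : AEStronglyMeasurable h μp := by
    rw [hhind]
    exact ((Continuous.measurable (by continuity)).indicator hC).aestronglyMeasurable
  -- integrability of h
  have h1int : Integrable (fun r : ℝ => |r * Real.exp (-r ^ 2 / 2)|)
      (volume.restrict (Set.Ioi (0:ℝ))) := by
    have : (fun r : ℝ => r * Real.exp (-r ^ 2 / 2))
        = fun r : ℝ => r * Real.exp (-(1/2) * r ^ 2) := by funext r; ring_nf
    have base : Integrable (fun r : ℝ => r * Real.exp (-r ^ 2 / 2))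
        (volume.restrict (Set.Ioi (0:ℝ))) := by
      rw [this]
      exact (integrable_mul_exp_neg_mul_sq (by norm_num : (0:ℝ) < 1/2)).integrableOn
    exact base.abs
  have hcint : Integrable (fun _ : ℝ => (1:ℝ)) (volume.restrict (Set.Ioo (-π) π)) :=
    integrableOn_const measure_Ioo_lt_top.ne
  have hbound : Integrable (fun p : ℝ × ℝ => |p.1 * Real.exp (-p.1 ^ 2 / 2)| * 1) μp :=
    Integrable.mul_prod h1int hcint
  have hint : Integrable h μp := by
    apply Integrable.mono' hbound hmeas
    filter_upwards with p
    rw [hh]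
    dsimp only
    split
    · rw [Real.norm_eq_abs, mul_one]
    · rw [norm_zero, mul_one]
      positivity
  -- gaussian half-line integral
  have hB : (∫ s in Set.Ioi (0:ℝ), Real.exp (-s ^ 2 / 2)) = Real.sqrt (2 * π) / 2 := by
    have heq : ∀ s : ℝ, Real.exp (-s ^ 2 / 2) = Real.exp (-(1/2) * s ^ 2) := fun s => by
      ring_nf
    simp_rw [heq]
    rw [integral_gaussian_Ioi, show π / (1/2 : ℝ) = 2 * π by ring]
  -- the double integral as a product
  have hprod : (∫ t in Set.Ioi x, Real.exp (-t ^ 2 / 2)) * (Real.sqrt (2 * π) / 2)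
      = ∫ p : ℝ × ℝ, f p := by
    rw [← hB, hf, MeasureTheory.integral_indicator (measurableSet_Ici.prod measurableSet_Ici),
      ← integral_Ici_eq_integral_Ioi, ← integral_Ici_eq_integral_Ioi]
    have hsplit : ∀ q : ℝ × ℝ, Real.exp (-(q.1 ^ 2 + q.2 ^ 2) / 2)
        = Real.exp (-q.1 ^ 2 / 2) * Real.exp (-q.2 ^ 2 / 2) := fun q => by
      rw [← Real.exp_add]; ring_nf
    simp_rw [hsplit]
    rw [Measure.volume_eq_prod, setIntegral_prod_mul (fun t : ℝ => Real.exp (-t ^ 2 / 2))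
        (fun s : ℝ => Real.exp (-s ^ 2 / 2))]
  -- polar coordinates and Fubini
  have hpolar : (∫ p : ℝ × ℝ, f p)
      = ∫ φ in Set.Ioo (-π) π, ∫ r in Set.Ioi (0:ℝ), h (r, φ) := by
    rw [← integral_comp_polarCoord_symm f]
    simp_rw [hpt]
    rw [polarCoord_target, Measure.volume_eq_prod, ← Measure.prod_restrict, ← hμp,
      MeasureTheory.integral_prod h hint]
    exact MeasureTheory.integral_integral_swap (by exact hint)
  -- compute the inner integral a.e.
  have hnull : ∀ᵐ φ : ℝ, φ ∉ ({0, π/2} : Set ℝ) := by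
    rw [← MeasureTheory.measure_eq_zero_iff_ae_notMem]
    exact ((Set.finite_singleton (π/2)).insert 0).measure_zero volume
  have hinner : ∀ᵐ φ ∂(volume.restrict (Set.Ioo (-π) π)),
      (∫ r in Set.Ioi (0:ℝ), h (r, φ))
        = (Set.Ioo 0 (π/2)).indicator (fun φ => Real.exp (-x ^ 2 / (2 * Real.cos φ ^ 2))) φ := by
    rw [ae_restrict_iff' measurableSet_Ioo]
    filter_upwards [hnull] with φ hne hmem
    simp only [Set.mem_insert_iff, Set.mem_singleton_iff, not_or] at hne
    obtain ⟨hφ0, hφh⟩ := hne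
    obtain ⟨hφl, hφu⟩ := hmem
    rcases lt_trichotomy φ 0 with hneg | rfl | hpos
    · -- sin φ < 0, integrand vanishes
      have hsin : Real.sin φ < 0 := Real.sin_neg_of_neg_of_neg_pi_lt hneg hφl
      have hz : ∀ r ∈ Set.Ioi (0:ℝ), h (r, φ) = 0 := by
        intro r hr
        rw [hh]
        dsimp only
        rw [if_neg]
        rintro ⟨-, habs⟩
        nlinarith [Set.mem_Ioi.1 hr]
      rw [setIntegral_congr_fun measurableSet_Ioi hz, MeasureTheory.integral_zero,
        Set.indicator_of_notMem]
      rintro ⟨habs, -⟩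
      linarith
    · exact absurd rfl hφ0
    rcases lt_trichotomy φ (π/2) with hlt | heq | hgt
    · -- main case 0 < φ < π/2
      have hcos : 0 < Real.cos φ := Real.cos_pos_of_mem_Ioo ⟨by linarith, hlt⟩
      have hsin : 0 < Real.sin φ := Real.sin_pos_of_pos_of_lt_pi hpos (by linarith)
      set c : ℝ := x / Real.cos φ with hc
      have hc0 : 0 ≤ c := div_nonneg hx hcos.le
      have hz : ∀ r ∈ Set.Ioi (0:ℝ), h (r, φ)
          = (Set.Ici c).indicator (fun r => r * Real.exp (-r ^ 2 / 2)) r := by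
        intro r hr
        have hr0 : 0 < r := Set.mem_Ioi.1 hr
        rw [hh]
        dsimp only
        rw [Set.indicator_apply]
        have hcond : (x ≤ r * Real.cos φ ∧ 0 ≤ r * Real.sin φ) ↔ r ∈ Set.Ici c := by
          constructor
          · rintro ⟨h1, -⟩
            rw [Set.mem_Ici, hc, div_le_iff₀ hcos]
            linarith
          · intro hrc
            rw [Set.mem_Ici, hc, div_le_iff₀ hcos] at hrc
            exact ⟨by linarith, by positivity⟩
        simp only [hcond]
      have hset : (Set.Ioi (0:ℝ) ∩ Set.Ici c : Set ℝ) =ᵐ[volume] Set.Ioi c := by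
        rcases eq_or_lt_of_le hc0 with hc' | hc'
        · have hsi : Set.Ioi (0:ℝ) ∩ Set.Ici c = Set.Ioi c := by
            rw [← hc']
            exact Set.inter_eq_left.2 Set.Ioi_subset_Ici_self
          rw [hsi]
          exact Filter.EventuallyEq.rfl
        · have hsi : Set.Ioi (0:ℝ) ∩ Set.Ici c = Set.Ici c :=
            Set.inter_eq_right.2 (fun r hr => lt_of_lt_of_le hc' hr)
          rw [hsi]
          exact (MeasureTheory.Ioi_ae_eq_Ici).symm
      rw [setIntegral_congr_fun measurableSet_Ioi hz,
        setIntegral_indicator measurableSet_Ici, setIntegral_congr_set hset,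
        radial_integral c, Set.indicator_of_mem (Set.mem_Ioo.2 ⟨hpos, hlt⟩)]
      congr 1
      rw [hc, div_pow]
      field_simp
    · exact absurd heq hφh
    · -- π/2 < φ < π : cos φ < 0, integrand vanishes
      have hcos : Real.cos φ < 0 := Real.cos_neg_of_pi_div_two_lt_of_lt hgt (by linarith)
      have hz : ∀ r ∈ Set.Ioi (0:ℝ), h (r, φ) = 0 := by
        intro r hr
        rw [hh]
        dsimp only
        rw [if_neg]
        rintro ⟨habs, -⟩
        nlinarith [Set.mem_Ioi.1 hr]
      rw [setIntegral_congr_fun measurableSet_Ioi hz, MeasureTheory.integral_zero,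
        Set.indicator_of_notMem]
      rintro ⟨-, habs⟩
      linarith
  -- assemble the angular integral
  have houter : (∫ φ in Set.Ioo (-π) π, ∫ r in Set.Ioi (0:ℝ), h (r, φ))
      = ∫ θ in (0 : ℝ)..(π / 2), Real.exp (-x ^ 2 / (2 * Real.sin θ ^ 2)) := by
    rw [MeasureTheory.integral_congr_ae hinner,
      setIntegral_indicator measurableSet_Ioo]
    have hsub : (Set.Ioo (-π) π ∩ Set.Ioo 0 (π/2) : Set ℝ) = Set.Ioo 0 (π/2) :=
      Set.inter_eq_right.2 (fun φ hφ => ⟨by nlinarith [pi_pos, hφ.1], by nlinarith [pi_pos, hφ.2]⟩)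
    rw [hsub]
    have h1 : (∫ φ in Set.Ioo (0:ℝ) (π/2), Real.exp (-x ^ 2 / (2 * Real.cos φ ^ 2)))
        = ∫ φ in (0:ℝ)..(π/2), Real.exp (-x ^ 2 / (2 * Real.cos φ ^ 2)) := by
      rw [intervalIntegral.integral_of_le (by positivity), MeasureTheory.integral_Ioc_eq_integral_Ioo]
    rw [h1]
    have h2 : ∀ φ : ℝ, Real.exp (-x ^ 2 / (2 * Real.cos φ ^ 2))
        = Real.exp (-x ^ 2 / (2 * Real.sin (π/2 - φ) ^ 2)) := by
      intro φ
      rw [Real.sin_pi_div_two_sub]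
    simp_rw [h2]
    rw [intervalIntegral.integral_comp_sub_left
      (fun θ => Real.exp (-x ^ 2 / (2 * Real.sin θ ^ 2))) (π/2)]
    norm_num
  -- final algebra
  have key : (∫ t in Set.Ioi x, Real.exp (-t ^ 2 / 2)) * (Real.sqrt (2 * π) / 2)
      = ∫ θ in (0 : ℝ)..(π / 2), Real.exp (-x ^ 2 / (2 * Real.sin θ ^ 2)) := by
    rw [hprod, hpolar, houter]
  set I := ∫ θ in (0 : ℝ)..(π / 2), Real.exp (-x ^ 2 / (2 * Real.sin θ ^ 2))
  have hs : (0:ℝ) < Real.sqrt (2 * π) := Real.sqrt_pos.2 (by positivity)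
  have hs2 : Real.sqrt (2 * π) ^ 2 = 2 * π := Real.sq_sqrt (by positivity)
  rw [gaussQ]
  have hA : (∫ t in Set.Ioi x, Real.exp (-t ^ 2 / 2)) = 2 * I / Real.sqrt (2 * π) := by
    field_simp at key ⊢
    linarith
  rw [hA]
  have hπ : (0:ℝ) < π := pi_pos
  generalize hgen : Real.sqrt (2 * π) = s at hs hs2 ⊢
  field_simp
  have hIs : I * s ^ 2 = I * (2 * π) := by rw [hs2]
  linarith [hIs]
end

section
/- If |h|² is exponentially distributed with mean γ > 0 and Q is the Gaussian tail function, then ρ · E[Q(√(2ρ|h|²))] converges to 1/(4γ) as ρ → ∞. -/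
open Real MeasureTheory ProbabilityTheory Filter

open Set

lemma expHalfSq_integrable : Integrable (fun t : ℝ => Real.exp (-t ^ 2 / 2)) := by
  have h := integrable_exp_neg_mul_sq (by norm_num : (0:ℝ) < 1/2)
  exact h.congr (by filter_upwards with t; congr 1; ring)

lemma gaussQ_nonneg (x : ℝ) : 0 ≤ gaussQ x :=
  mul_nonneg (inv_nonneg.2 (Real.sqrt_nonneg _))
    (integral_nonneg fun t => (Real.exp_pos _).le)

lemma gaussQ_antitone : Antitone gaussQ := by
  intro a b hab
  refine mul_le_mul_of_nonneg_left ?_ (inv_nonneg.2 (Real.sqrt_nonneg _))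
  refine setIntegral_mono_set expHalfSq_integrable.integrableOn
    (ae_of_all _ fun t => (Real.exp_pos _).le) ?_
  exact HasSubset.Subset.eventuallyLE (Ioi_subset_Ioi hab)

lemma gaussQ_measurable : Measurable gaussQ := gaussQ_antitone.measurable

section Tail

variable {Ω : Type*} [MeasurableSpace Ω] (P : Measure Ω) [IsProbabilityMeasure P]
  (X : Ω → ℝ) (hXm : Measurable X) (γ : ℝ) (hγ : 0 < γ)
  (hX : ∀ t : ℝ, 0 ≤ t → P {ω | X ω > t} = ENNReal.ofReal (Real.exp (-(t / γ))))

include hγ hX in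
lemma tail_ge {b : ℝ} (hb : 0 ≤ b) :
    P {ω | b ≤ X ω} = ENNReal.ofReal (Real.exp (-(b / γ))) := by
  refine le_antisymm ?_ ?_
  · refine ge_of_tendsto (f := fun ε : ℝ => ENNReal.ofReal (Real.exp (-((b - ε) / γ))))
      (x := nhdsWithin (0:ℝ) (Ioi 0)) ?_ ?_
    · have hc : Continuous fun ε : ℝ => ENNReal.ofReal (Real.exp (-((b - ε) / γ))) :=
        ENNReal.continuous_ofReal.comp (Real.continuous_exp.comp
          (((continuous_const.sub continuous_id).div_const γ).neg))
      have h0 : Tendsto (fun ε : ℝ => ENNReal.ofReal (Real.exp (-((b - ε) / γ))))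
          (nhdsWithin (0:ℝ) (Ioi 0))
          (nhds (ENNReal.ofReal (Real.exp (-((b - (0:ℝ)) / γ))))) :=
        (hc.tendsto 0).mono_left nhdsWithin_le_nhds
      simpa using h0
    · filter_upwards [self_mem_nhdsWithin] with ε (hε : 0 < ε)
      rcases le_or_gt b ε with h | h
      · -- b - ε ≤ 0, use t = 0
        calc P {ω | b ≤ X ω} ≤ 1 := prob_le_one
        _ ≤ ENNReal.ofReal (Real.exp (-((b - ε) / γ))) := by
            rw [ENNReal.one_le_ofReal, Real.one_le_exp_iff, neg_nonneg]
            exact div_nonpos_of_nonpos_of_nonneg (by linarith) hγ.le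
      · have h0 : (0:ℝ) ≤ b - ε := by linarith
        rw [← hX (b - ε) h0]
        refine measure_mono fun ω hω => ?_
        simp only [Set.mem_setOf_eq] at hω ⊢
        linarith
  · rw [← hX b hb]
    exact measure_mono fun ω (hω : b < X ω) => hω.le

include hXm hγ hX in
lemma tail_lt {b : ℝ} (hb : 0 < b) :
    P {ω | X ω < b} = ENNReal.ofReal (1 - Real.exp (-(b / γ))) := by
  have hset : {ω | X ω < b} = {ω | b ≤ X ω}ᶜ := by
    ext ω; simp [not_le]
  have hms : MeasurableSet {ω | b ≤ X ω} := measurableSet_le measurable_const hXm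
  rw [hset, prob_compl_eq_one_sub hms, tail_ge P X γ hγ hX hb.le]
  rw [ENNReal.ofReal_sub 1 (Real.exp_nonneg _), ENNReal.ofReal_one]

include hXm hγ hX in
lemma integral_gaussQ_eq {ρ : ℝ} (hρ : 0 < ρ) :
    ∫ ω, gaussQ (Real.sqrt (2 * ρ * X ω)) ∂P
      = 1/2 - 1/2 * (Real.sqrt (1 + 1/(ρ*γ)))⁻¹ := by
  set s : Ω → ℝ := fun ω => Real.sqrt (2 * ρ * X ω) with hs
  have hsm : Measurable s := (hXm.const_mul (2*ρ)).sqrt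
  have hg : Measurable fun ω => gaussQ (s ω) := gaussQ_measurable.comp hsm
  set c : ℝ := (Real.sqrt (2 * Real.pi))⁻¹ with hc
  have hcpos : 0 < c := inv_pos.2 (Real.sqrt_pos.2 (by positivity))
  set k : ℝ := 1 + 1/(ρ*γ) with hk
  have hk1 : 1 ≤ k := le_add_of_nonneg_right (by positivity)
  have hk0 : 0 < k := lt_of_lt_of_le one_pos hk1
  set bb : ℝ := k/2 with hbb
  clear_value c k bb
  have hbb0 : 0 < bb := by rw [hbb, hk]; positivity
  have hbbhalf : (1:ℝ)/2 ≤ bb := by rw [hbb]; linarith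
  rw [integral_eq_lintegral_of_nonneg_ae (ae_of_all _ fun ω => gaussQ_nonneg _)
    hg.aestronglyMeasurable]
  have step1 : ∀ ω, ENNReal.ofReal (gaussQ (s ω))
      = ENNReal.ofReal c *
        ∫⁻ t, (Ioi (s ω)).indicator (fun t => ENNReal.ofReal (Real.exp (-t^2/2))) t := by
    intro ω
    rw [hc, gaussQ, ENNReal.ofReal_mul (by positivity)]
    congr 1
    rw [ofReal_integral_eq_lintegral_ofReal expHalfSq_integrable.integrableOn
      (ae_of_all _ fun t => (Real.exp_pos _).le)]
    rw [← lintegral_indicator measurableSet_Ioi]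
  simp_rw [step1]
  rw [lintegral_const_mul' _ _ ENNReal.ofReal_ne_top]
  have swap : (∫⁻ ω, ∫⁻ t,
        (Ioi (s ω)).indicator (fun t => ENNReal.ofReal (Real.exp (-t^2/2))) t ∂volume ∂P)
      = ∫⁻ t, ENNReal.ofReal (Real.exp (-t^2/2)) * P {ω | s ω < t} ∂volume := by
    have hGm : Measurable fun p : Ω × ℝ =>
        ({p : Ω × ℝ | s p.1 < p.2}).indicator
          (fun p : Ω × ℝ => ENNReal.ofReal (Real.exp (-p.2^2/2))) p := by
      refine Measurable.indicator ?_ (measurableSet_lt (hsm.comp measurable_fst)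
        measurable_snd)
      exact (ENNReal.measurable_ofReal.comp
        ((Real.measurable_exp.comp ((measurable_snd.pow_const 2).neg.div_const 2))))
    have heq : ∀ ω t, (Ioi (s ω)).indicator
          (fun t => ENNReal.ofReal (Real.exp (-t^2/2))) t
        = ({p : Ω × ℝ | s p.1 < p.2}).indicator
          (fun p : Ω × ℝ => ENNReal.ofReal (Real.exp (-p.2^2/2))) (ω, t) := by
      intro ω t
      simp only [Set.indicator_apply, Set.mem_Ioi, Set.mem_setOf_eq]
    simp_rw [heq]
    rw [lintegral_lintegral_swap hGm.aemeasurable]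
    refine lintegral_congr fun t => ?_
    have : ∀ ω, ({p : Ω × ℝ | s p.1 < p.2}).indicator
          (fun p : Ω × ℝ => ENNReal.ofReal (Real.exp (-p.2^2/2))) (ω, t)
        = ({ω | s ω < t}).indicator
          (fun _ => ENNReal.ofReal (Real.exp (-t^2/2))) ω := by
      intro ω
      simp only [Set.indicator_apply, Set.mem_setOf_eq]
    simp_rw [this]
    rw [lintegral_indicator_const (measurableSet_lt hsm measurable_const)]
  rw [swap]
  -- restrict to Ioi 0
  have step4 : (∫⁻ t, ENNReal.ofReal (Real.exp (-t^2/2)) * P {ω | s ω < t} ∂volume)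
      = ∫⁻ t in Ioi (0:ℝ), ENNReal.ofReal (Real.exp (-t^2/2)) * P {ω | s ω < t} ∂volume := by
    rw [← lintegral_indicator measurableSet_Ioi]
    refine lintegral_congr fun t => ?_
    by_cases h : t ∈ Ioi (0:ℝ)
    · rw [Set.indicator_apply, if_pos h]
    · rw [Set.indicator_apply, if_neg h]
      have ht : t ≤ 0 := by simpa using h
      have : {ω | s ω < t} = ∅ := by
        ext ω
        simp only [Set.mem_setOf_eq, Set.mem_empty_iff_false, iff_false, not_lt]
        exact le_trans ht (Real.sqrt_nonneg _)
      rw [this, measure_empty, mul_zero]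
  rw [step4]
  have step5 : (∫⁻ t in Ioi (0:ℝ),
        ENNReal.ofReal (Real.exp (-t^2/2)) * P {ω | s ω < t} ∂volume)
      = ∫⁻ t in Ioi (0:ℝ),
        ENNReal.ofReal (Real.exp (-(1/2)*t^2) - Real.exp (-bb*t^2)) ∂volume := by
    refine setLIntegral_congr_fun measurableSet_Ioi (fun t ht => ?_)
    have ht : (0:ℝ) < t := ht
    have hsets : {ω | s ω < t} = {ω | X ω < t^2/(2*ρ)} := by
      ext ω
      simp only [Set.mem_setOf_eq, hs]
      rw [Real.sqrt_lt' ht, lt_div_iff₀ (by positivity : (0:ℝ) < 2*ρ)]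
      constructor <;> intro h <;> linarith [h]
    rw [hsets, tail_lt P X hXm γ hγ hX (by positivity : (0:ℝ) < t^2/(2*ρ))]
    rw [← ENNReal.ofReal_mul (Real.exp_pos _).le]
    congr 1
    rw [mul_sub, mul_one, ← Real.exp_add]
    congr 1
    · ring
    · rw [hbb, hk]
      field_simp
      ring
  rw [step5]
  have hint1 : Integrable (fun t : ℝ => Real.exp (-(1/2)*t^2)) :=
    integrable_exp_neg_mul_sq (by norm_num)
  have hint2 : Integrable (fun t : ℝ => Real.exp (-bb*t^2)) :=
    integrable_exp_neg_mul_sq hbb0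
  have hnn : ∀ t : ℝ, 0 ≤ Real.exp (-(1/2)*t^2) - Real.exp (-bb*t^2) := by
    intro t
    have : -bb*t^2 ≤ -(1/2)*t^2 := by nlinarith [sq_nonneg t]
    have := Real.exp_le_exp.2 this
    linarith
  have hint3 : IntegrableOn (fun t : ℝ => Real.exp (-(1/2)*t^2) - Real.exp (-bb*t^2))
      (Ioi 0) volume := (hint1.sub hint2).integrableOn
  rw [← ofReal_integral_eq_lintegral_ofReal hint3 (ae_of_all _ fun t => hnn t)]
  rw [integral_sub hint1.integrableOn hint2.integrableOn,
    integral_gaussian_Ioi, integral_gaussian_Ioi]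
  have hVnn : 0 ≤ Real.sqrt (Real.pi / (1/2)) / 2 - Real.sqrt (Real.pi / bb) / 2 := by
    have h1 : Real.sqrt (Real.pi / bb) ≤ Real.sqrt (Real.pi / (1/2)) := by
      apply Real.sqrt_le_sqrt
      exact div_le_div_of_nonneg_left Real.pi_pos.le (by norm_num) hbbhalf
    linarith
  rw [← ENNReal.ofReal_mul hcpos.le,
    ENNReal.toReal_ofReal (mul_nonneg hcpos.le hVnn)]
  · -- final algebra
    have hS : Real.sqrt (2 * Real.pi) ≠ 0 := by positivity
    have h1 : Real.sqrt (Real.pi / (1/2)) = Real.sqrt (2 * Real.pi) := by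
      congr 1; ring
    have h2 : Real.sqrt (Real.pi / bb) = Real.sqrt (2 * Real.pi) / Real.sqrt k := by
      rw [show Real.pi / bb = (2 * Real.pi) / k by rw [hbb]; field_simp]
      exact Real.sqrt_div (by positivity) k
    rw [h1, h2, hc]
    have hsk : Real.sqrt k ≠ 0 := by positivity
    field_simp

end Tail

lemma tendsto_aux (γ : ℝ) (hγ : 0 < γ) :
    Tendsto (fun ρ : ℝ => ρ * (1/2 - 1/2 * (Real.sqrt (1 + 1/(ρ*γ)))⁻¹))
      atTop (nhds (1 / (4 * γ))) := by
  set f : ℝ → ℝ := fun u => 1 - (Real.sqrt (1+u))⁻¹ with hf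
  have hderiv : HasDerivAt f (1/2) 0 := by
    have h1 : HasDerivAt (fun u : ℝ => Real.sqrt (1+u)) (1/(2*Real.sqrt 1)) 0 := by
      have ha : HasDerivAt (fun u : ℝ => 1+u) 1 0 := by
        simpa using (hasDerivAt_id (0:ℝ)).const_add 1
      have hb : HasDerivAt Real.sqrt (1/(2*Real.sqrt 1)) (1+0 : ℝ) := by
        simpa using Real.hasDerivAt_sqrt (by norm_num : (1:ℝ) + 0 ≠ 0)
      have h4 := hb.comp (0:ℝ) ha
      rw [mul_one] at h4
      exact h4
    have h2 : HasDerivAt (fun u : ℝ => (Real.sqrt (1+u))⁻¹)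
        (-(1/(2*Real.sqrt 1)) / (Real.sqrt (1+0))^2) 0 := by
      apply h1.inv
      simp [Real.sqrt_one]
    have h3 := h2.const_sub 1
    have h4 : (-(-(1 / (2 * Real.sqrt 1)) / Real.sqrt (1 + 0) ^ 2) : ℝ) = 1/2 := by
      norm_num [Real.sqrt_one]
    rw [h4] at h3
    exact h3
  have hslope := hasDerivAt_iff_tendsto_slope.1 hderiv
  have hu : Tendsto (fun ρ : ℝ => (ρ*γ)⁻¹) atTop (nhdsWithin 0 {(0:ℝ)}ᶜ) := by
    rw [tendsto_nhdsWithin_iff]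
    constructor
    · exact (Tendsto.atTop_mul_const hγ tendsto_id).inv_tendsto_atTop
    · filter_upwards [eventually_gt_atTop (0:ℝ)] with ρ hρ
      simp only [Set.mem_compl_iff, Set.mem_singleton_iff]
      positivity
  have hcomp := hslope.comp hu
  have hmain : Tendsto (fun ρ : ℝ => (1/(2*γ)) * slope f 0 ((ρ*γ)⁻¹))
      atTop (nhds ((1/(2*γ)) * (1/2))) := hcomp.const_mul _
  have hval : (1/(2*γ)) * (1/2 : ℝ) = 1/(4*γ) := by ring
  rw [hval] at hmain
  refine hmain.congr' ?_
  filter_upwards [eventually_gt_atTop (0:ℝ)] with ρ hρ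
  have hu0 : (ρ*γ)⁻¹ ≠ 0 := by positivity
  have hf0 : f 0 = 0 := by simp [hf, Real.sqrt_one]
  rw [slope_def_field, hf0]
  simp only [hf]
  field_simp
  ring

/-- If `X = |h|²` is exponentially distributed with mean `γ > 0`, then
`ρ · E[Q(√(2ρX))] → 1/(4γ)` as `ρ → ∞`. -/
theorem stmt_7 {Ω : Type*} [MeasurableSpace Ω] (P : Measure Ω) [IsProbabilityMeasure P]
    (X : Ω → ℝ) (hXm : Measurable X) (γ : ℝ) (hγ : 0 < γ)
    (hX : ∀ t : ℝ, 0 ≤ t → P {ω | X ω > t} = ENNReal.ofReal (Real.exp (-(t / γ)))) :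
    Tendsto (fun ρ : ℝ => ρ * ∫ ω, gaussQ (Real.sqrt (2 * ρ * X ω)) ∂P)
      atTop (nhds (1 / (4 * γ))) := by
  refine (tendsto_aux γ hγ).congr' ?_
  filter_upwards [eventually_gt_atTop (0:ℝ)] with ρ hρ
  rw [integral_gaussQ_eq P X hXm γ hγ hX hρ]
end
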